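/- arXiv:1203.1104 — 7 statements merged into one kernel-verified Lean document; each statement's English description precedes it below -/
import Mathlib

section
/- Let m ∈ ℕ₀ and let x ∈ ℓ²(ℕ₀) be a complex sequence with (k^m · x_k)_{k∈ℕ₀} ∈ ℓ². Then for every real p with p > 2/(2m+1), the sequence x belongs to ℓ^p, i.e., ∑_k |x_k|^p < ∞. -/
theorem stmt_1 (m : ℕ) (x : ℕ → ℂ)
    (hx : Summable (fun k : ℕ => ‖x k‖ ^ 2))
    (hHx : Summable (fun k : ℕ => ‖((k : ℂ) ^ m) * x k‖ ^ 2))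
    (p : ℝ) (hp : p > 2 / (2 * (m : ℝ) + 1)) :
    Summable (fun k : ℕ => ‖x k‖ ^ p) := by
  have hm0 : (0:ℝ) < 2 * (m:ℝ) + 1 := by positivity
  have hp0 : 0 < p := lt_of_le_of_lt (by positivity) hp
  rcases le_or_gt 2 p with h2p | h2p
  · -- p ≥ 2 : compare with ‖x k‖^2 eventually
    have htend : Filter.Tendsto (fun k => ‖x k‖ ^ 2) Filter.atTop (nhds 0) :=
      hx.tendsto_atTop_zero
    have hev : ∀ᶠ k in Filter.atTop, ‖x k‖ ^ 2 ≤ 1 :=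
      htend.eventually_le_const (by norm_num)
    obtain ⟨N, hN⟩ := hev.exists_forall_of_atTop
    rw [← summable_nat_add_iff N]
    refine Summable.of_nonneg_of_le (fun n => by positivity) (fun n => ?_)
      ((summable_nat_add_iff N).mpr hx)
    have h1 : ‖x (n + N)‖ ≤ 1 := by
      have := hN (n + N) (Nat.le_add_left N n)
      nlinarith [norm_nonneg (x (n + N))]
    rcases eq_or_lt_of_le (norm_nonneg (x (n + N))) with h0 | h0
    · rw [← h0, Real.zero_rpow (ne_of_gt hp0)]; positivity
    · calc ‖x (n + N)‖ ^ p ≤ ‖x (n + N)‖ ^ (2:ℝ) :=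
            Real.rpow_le_rpow_of_exponent_ge h0 h1 h2p
        _ = ‖x (n + N)‖ ^ 2 := by rw [Real.rpow_two]
  · -- p < 2 : Young-type comparison
    set θ : ℝ := p / 2 with hθdef
    have hθ0 : 0 < θ := by positivity
    have hθ1 : θ < 1 := by rw [hθdef]; linarith
    set q : ℝ := 2 * m * p / (2 - p) with hqdef
    have h2p' : (0:ℝ) < 2 - p := by linarith
    have hq1 : 1 < q := by
      rw [hqdef, lt_div_iff₀ h2p']
      have : 2 < p * (2 * (m:ℝ) + 1) := by
        rw [gt_iff_lt, div_lt_iff₀ hm0] at hp; linarith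
      nlinarith
    have hA : Summable (fun k : ℕ => ((k:ℝ) ^ m * ‖x k‖) ^ 2) := by
      refine hHx.congr fun k => ?_
      rw [norm_mul, norm_pow, Complex.norm_natCast]
    have hB : Summable (fun n : ℕ => ((n:ℝ)) ^ (-q)) :=
      Real.summable_nat_rpow.mpr (by linarith)
    rw [← summable_nat_add_iff 1]
    have hsum : Summable (fun n : ℕ =>
        θ * (((n+1:ℕ):ℝ) ^ m * ‖x (n+1)‖) ^ 2 + (1 - θ) * (((n+1:ℕ):ℝ)) ^ (-q)) := by
      exact (((summable_nat_add_iff 1).mpr hA).mul_left θ).add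
        (((summable_nat_add_iff 1).mpr hB).mul_left (1 - θ))
    refine Summable.of_nonneg_of_le (fun n => by positivity) (fun n => ?_) hsum
    set k : ℕ := n + 1
    have hk1 : (1:ℝ) ≤ (k:ℝ) := by exact_mod_cast Nat.one_le_iff_ne_zero.mpr (Nat.succ_ne_zero n)
    have hk0 : (0:ℝ) < (k:ℝ) := lt_of_lt_of_le one_pos hk1
    set A : ℝ := ((k:ℝ) ^ m * ‖x k‖) ^ 2
    set B : ℝ := ((k:ℝ)) ^ (-q)
    have hA0 : 0 ≤ A := by positivity
    have hB0 : 0 ≤ B := by positivity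
    have hgm : A ^ θ * B ^ (1 - θ) ≤ θ * A + (1 - θ) * B :=
      Real.geom_mean_le_arith_mean2_weighted (le_of_lt hθ0) (by linarith) hA0 hB0 (by ring)
    refine le_trans (le_of_eq ?_) hgm
    have hc0 : (0:ℝ) ≤ (k:ℝ) ^ m * ‖x k‖ := by positivity
    have hAθ : A ^ θ = (k:ℝ) ^ ((m:ℝ) * p) * ‖x k‖ ^ p := by
      have e1 : A = ((k:ℝ) ^ m * ‖x k‖) ^ ((2:ℝ)) := by
        rw [Real.rpow_two]
      rw [e1, ← Real.rpow_mul hc0]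
      have e2 : (2:ℝ) * θ = p := by rw [hθdef]; ring
      rw [e2, Real.mul_rpow (by positivity) (norm_nonneg _),
        ← Real.rpow_natCast ((k:ℝ)) m, ← Real.rpow_mul (le_of_lt hk0)]
    have hBθ : B ^ (1 - θ) = (k:ℝ) ^ (-((m:ℝ) * p)) := by
      rw [show B = ((k:ℝ)) ^ (-q) from rfl, ← Real.rpow_mul (le_of_lt hk0)]
      congr 1
      rw [hqdef, hθdef]
      field_simp
    rw [hAθ, hBθ]
    rw [mul_assoc, mul_comm (‖x k‖ ^ p), ← mul_assoc, ← Real.rpow_add hk0]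
    simp
end

section
/- The subspace D₀ = {x ∈ ℓ²(ℕ₀) : (k·x_k) ∈ ℓ² and ∑_k x_k = 0} is dense in ℓ²(ℕ₀). -/
theorem stmt_2 :
    Dense {x : lp (fun _ : ℕ => ℂ) 2 |
      Summable (fun k : ℕ => ‖(k : ℂ) * x k‖ ^ 2) ∧ ∑' k, x k = 0} := by
  rw [Metric.dense_iff]
  intro f ε hε
  have hp : (0:ℝ) < (2:ENNReal).toReal := by norm_num
  have hsum := lp.hasSum_single (E := fun _ : ℕ => ℂ) (by norm_num : (2:ENNReal) ≠ ⊤) f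
  obtain ⟨s, hs⟩ := Metric.tendsto_atTop.mp hsum (ε/2) (by positivity)
  have hgf : dist (∑ i ∈ s, lp.single 2 i (f i)) f < ε/2 := hs s le_rfl
  set g : lp (fun _ : ℕ => ℂ) 2 := ∑ i ∈ s, lp.single 2 i (f i) with hg
  set S : ℂ := ∑ i ∈ s, f i with hS
  -- choose n
  obtain ⟨n, hn⟩ : ∃ n : ℕ, 0 < n ∧ ‖S‖ ^ 2 / n < (ε/2)^2 := by
    obtain ⟨n, hn⟩ := exists_nat_gt (‖S‖ ^ 2 / (ε/2)^2)
    refine ⟨n + 1, Nat.succ_pos n, ?_⟩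
    rw [div_lt_iff₀ (by positivity)]
    have : ‖S‖ ^ 2 / (ε/2)^2 < (n+1 : ℕ) := by push_cast; push_cast at hn; linarith
    calc ‖S‖ ^ 2 = (‖S‖ ^ 2 / (ε/2)^2) * (ε/2)^2 := by
            field_simp
      _ < (n+1:ℕ) * (ε/2)^2 := by
            apply mul_lt_mul_of_pos_right this (by positivity)
      _ = (ε/2)^2 * (n+1:ℕ) := by ring
  obtain ⟨hn0, hnS⟩ := hn
  set m : ℕ := s.sup id + 1 with hm
  set t : Finset ℕ := Finset.Ico m (m + n) with ht
  have hst : Disjoint s t := by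
    rw [Finset.disjoint_left]
    intro a ha hat
    have h1 : a ≤ s.sup id := Finset.le_sup (f := id) ha
    have h2 : m ≤ a := (Finset.mem_Ico.mp hat).1
    omega
  have htcard : t.card = n := by simp [ht]
  set c : ℕ → ℂ := fun i => if i ∈ s then f i else -S / n with hc
  set u : Finset ℕ := s ∪ t with hu
  set x : lp (fun _ : ℕ => ℂ) 2 := ∑ i ∈ u, lp.single 2 i (c i) with hx
  have hcoe : ∀ j, x j = if j ∈ u then c j else 0 := by
    intro j
    rw [hx]
    simp only [lp.coeFn_sum, Finset.sum_apply]
    by_cases hj : j ∈ u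
    · rw [if_pos hj]
      rw [Finset.sum_eq_single_of_mem j hj
        (fun i _ hij => lp.single_apply_ne (E := fun _ : ℕ => ℂ) 2 i (c i) hij.symm)]
      exact lp.single_apply_self (E := fun _ : ℕ => ℂ) 2 j (c j)
    · rw [if_neg hj]
      apply Finset.sum_eq_zero
      intro i hi
      exact lp.single_apply_ne (E := fun _ : ℕ => ℂ) 2 i (c i)
        (fun (h : j = i) => hj (h.symm ▸ hi))
  -- split x = g + corr
  set corr : lp (fun _ : ℕ => ℂ) 2 := ∑ i ∈ t, lp.single 2 i (c i) with hcorr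
  have hxgc : x = g + corr := by
    rw [hx, hu, Finset.sum_union hst, hg, hcorr]
    congr 1
    apply Finset.sum_congr rfl
    intro i hi
    simp [hc, hi]
  -- norm of corr
  have hcorrnorm : ‖corr‖ < ε/2 := by
    have h2 := lp.norm_sum_single (E := fun _ : ℕ => ℂ) hp c t
    have hci : ∀ i ∈ t, ‖c i‖ = ‖S‖ / n := by
      intro i hi
      have : i ∉ s := Finset.disjoint_right.mp hst hi
      simp [hc, this, norm_div, abs_div]
    have hval : ∑ i ∈ t, ‖c i‖ ^ (2:ENNReal).toReal = ‖S‖ ^ 2 / n := by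
      rw [Finset.sum_congr rfl (fun i hi => by rw [hci i hi])]
      rw [Finset.sum_const, htcard]
      rw [ENNReal.toReal_ofNat, Real.rpow_two]
      rw [div_pow, nsmul_eq_mul]
      field_simp
    rw [hval, show ((2:ENNReal)).toReal = (2:ℝ) by norm_num, Real.rpow_two] at h2
    have hnorm2 : ‖corr‖ ^ 2 < (ε/2)^2 := by rw [h2]; exact hnS
    exact lt_of_pow_lt_pow_left₀ 2 (by positivity) hnorm2
  have hdist : dist f x < ε := by
    have : f - x = (f - g) - corr := by rw [hxgc]; abel
    calc dist f x = ‖f - x‖ := by rw [dist_eq_norm]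
      _ = ‖(f - g) - corr‖ := by rw [this]
      _ ≤ ‖f - g‖ + ‖corr‖ := norm_sub_le _ _
      _ < ε/2 + ε/2 := by
          have : ‖f - g‖ = dist g f := by rw [dist_eq_norm']; 
          exact add_lt_add (by rw [this]; exact hgf) hcorrnorm
      _ = ε := by ring
  refine ⟨x, ?_, ?_, ?_⟩
  · rw [Metric.mem_ball, dist_comm]; exact hdist
  · apply summable_of_ne_finset_zero (s := u)
    intro k hk
    rw [hcoe k, if_neg hk]
    simp
  · rw [tsum_eq_sum (s := u) (fun k hk => by rw [hcoe k, if_neg hk])]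
    rw [Finset.sum_congr rfl (fun k hk => by rw [hcoe k, if_pos hk])]
    rw [hu, Finset.sum_union hst]
    have h1 : ∑ i ∈ s, c i = S := Finset.sum_congr rfl (fun i hi => by simp [hc, hi])
    have h2 : ∑ i ∈ t, c i = -S := by
      have hct : ∀ i ∈ t, c i = -S / n := fun i hi => by
        simp [hc, Finset.disjoint_right.mp hst hi]
      rw [Finset.sum_congr rfl hct, Finset.sum_const, htcard, nsmul_eq_mul]
      have hn' : (n:ℂ) ≠ 0 := Nat.cast_ne_zero.mpr hn0.ne'
      field_simp
    rw [h1, h2]; ring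
end

section
/- Define G : ℝ \ ℕ₀ → ℝ by G(λ) = ∑_{k=0}^{∞} (1 + λk)/((k − λ)(1 + k²)). Then G(−1) > 0 and G(−2) < 0; consequently there exists λ ∈ (−2, −1) with G(λ) = 0. -/
noncomputable def G (l : ℝ) : ℝ :=
  ∑' k : ℕ, (1 + l * k) / ((k - l) * (1 + (k : ℝ) ^ 2))

open Finset Filter

/-- telescoping sum: ∑ 1/((k+c)(k+c+1)) = 1/c for c > 0 -/
lemma telescope_hasSum (c : ℝ) (hc : 0 < c) :
    HasSum (fun k : ℕ => 1 / (((k : ℝ) + c) * ((k : ℝ) + c + 1))) (1 / c) := by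
  have hpos : ∀ k : ℕ, (0:ℝ) < (k : ℝ) + c := fun k => by positivity
  have hterm : ∀ k : ℕ, 1 / (((k : ℝ) + c) * ((k : ℝ) + c + 1))
      = 1 / ((k : ℝ) + c) - 1 / ((k : ℝ) + c + 1) := by
    intro k
    have h1 := hpos k
    have h2 : (0:ℝ) < (k : ℝ) + c + 1 := by linarith
    field_simp
    ring
  rw [hasSum_iff_tendsto_nat_of_nonneg (fun k => by positivity)]
  have hsum : ∀ n : ℕ, ∑ k ∈ range n, 1 / (((k : ℝ) + c) * ((k : ℝ) + c + 1))
      = 1 / c - 1 / ((n : ℝ) + c) := by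
    intro n
    have h := Finset.sum_range_sub' (fun k : ℕ => 1 / ((k : ℝ) + c)) n
    simp only [Nat.cast_zero, zero_add] at h
    rw [← h]
    apply Finset.sum_congr rfl
    intro k _
    rw [hterm k]
    push_cast
    ring_nf
  simp only [hsum]
  have h0 : Tendsto (fun n : ℕ => 1 / ((n : ℝ) + c)) atTop (nhds 0) := by
    have := (tendsto_atTop_add_const_right atTop c tendsto_natCast_atTop_atTop)
    simp only [one_div]; exact this.inv_tendsto_atTop
  simpa using (tendsto_const_nhds (x := 1 / c)).sub h0

lemma telescope_summable (c : ℝ) (hc : 0 < c) :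
    Summable (fun k : ℕ => 1 / (((k : ℝ) + c) * ((k : ℝ) + c + 1))) :=
  (telescope_hasSum c hc).summable

/-- denominator is positive when l ≤ -1 -/
lemma denom_pos {l : ℝ} (hl : l ≤ -1) (k : ℕ) :
    0 < ((k : ℝ) - l) * (1 + (k : ℝ) ^ 2) := by
  have h1 : (0:ℝ) ≤ (k : ℝ) := Nat.cast_nonneg k
  have : (0:ℝ) < (k : ℝ) - l := by linarith
  positivity

/-- uniform bound for l ∈ [-2,-1] -/
lemma term_bound {l : ℝ} (hl : l ∈ Set.Icc (-2 : ℝ) (-1)) (k : ℕ) :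
    ‖(1 + l * k) / ((k - l) * (1 + (k : ℝ) ^ 2))‖
      ≤ 6 * (1 / (((k : ℝ) + 1) * ((k : ℝ) + 1 + 1))) := by
  obtain ⟨h2, h1⟩ := hl
  have hk : (0:ℝ) ≤ (k : ℝ) := Nat.cast_nonneg k
  have hd : 0 < ((k : ℝ) - l) * (1 + (k : ℝ) ^ 2) := denom_pos h1 k
  rw [Real.norm_eq_abs, abs_div, abs_of_pos hd, div_le_iff₀ hd]
  have hnum : |1 + l * (k : ℝ)| ≤ 1 + 2 * (k : ℝ) := by
    rw [abs_le]
    constructor <;> nlinarith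
  have hden : ((k : ℝ) + 1) ≤ (k : ℝ) - l := by linarith
  calc |1 + l * (k : ℝ)| ≤ 1 + 2 * (k : ℝ) := hnum
    _ ≤ 6 * (1 / (((k : ℝ) + 1) * ((k : ℝ) + 1 + 1))) * (((k : ℝ) + 1) * (1 + (k : ℝ) ^ 2)) := by
        rw [mul_one_div, div_mul_eq_mul_div, le_div_iff₀ (by positivity)]
        nlinarith [sq_nonneg ((k:ℝ) - 1), sq_nonneg ((k:ℝ))]
    _ ≤ 6 * (1 / (((k : ℝ) + 1) * ((k : ℝ) + 1 + 1))) * (((k : ℝ) - l) * (1 + (k : ℝ) ^ 2)) := by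
        apply mul_le_mul_of_nonneg_left _ (by positivity)
        exact mul_le_mul_of_nonneg_right hden (by positivity)

lemma summable_bound : Summable (fun k : ℕ => 6 * (1 / (((k : ℝ) + 1) * ((k : ℝ) + 1 + 1)))) :=
  (telescope_summable 1 one_pos).mul_left 6

lemma summable_G {l : ℝ} (hl : l ∈ Set.Icc (-2 : ℝ) (-1)) :
    Summable (fun k : ℕ => (1 + l * k) / ((k - l) * (1 + (k : ℝ) ^ 2))) :=
  Summable.of_norm <|
    Summable.of_nonneg_of_le (fun k => norm_nonneg _) (fun k => term_bound hl k) summable_bound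

lemma G_neg_one_pos : G (-1) > 0 := by
  set f : ℕ → ℝ := fun k => (1 + (-1:ℝ) * k) / ((k - (-1)) * (1 + (k : ℝ) ^ 2)) with hf
  have hs : Summable f := summable_G (by norm_num)
  have hsplit := Summable.sum_add_tsum_nat_add 5 hs
  have hstail : Summable (fun k : ℕ => f (k + 5)) := (summable_nat_add_iff 5).2 hs
  have hgle : ∀ k : ℕ, -(1 / (((k : ℝ) + 4) * ((k : ℝ) + 4 + 1))) ≤ f (k + 5) := by
    intro k
    have hk : (0:ℝ) ≤ (k : ℝ) := Nat.cast_nonneg k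
    have hA : (0:ℝ) < ((k:ℝ) + 4) * ((k:ℝ) + 4 + 1) := by positivity
    have hC : (0:ℝ) < (((k+5:ℕ):ℝ) - (-1)) * (1 + ((k+5:ℕ):ℝ)^2) :=
      denom_pos (by norm_num) (k+5)
    simp only [hf]
    rw [neg_le, ← neg_div, div_le_div_iff₀ hC hA]
    push_cast
    nlinarith
  have htail : -(1/4 : ℝ) ≤ ∑' k : ℕ, f (k + 5) := by
    have hg : HasSum (fun k : ℕ => -(1 / (((k : ℝ) + 4) * ((k : ℝ) + 4 + 1)))) (-(1/4)) :=
      (telescope_hasSum 4 (by norm_num)).neg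
    calc (-(1/4) : ℝ) = ∑' k : ℕ, -(1 / (((k : ℝ) + 4) * ((k : ℝ) + 4 + 1))) := hg.tsum_eq.symm
      _ ≤ ∑' k : ℕ, f (k + 5) := hg.summable.tsum_le_tsum hgle hstail
  have hhead : ∑ k ∈ range 5, f k = 173 / 204 := by
    simp only [hf, Finset.sum_range_succ, Finset.sum_range_zero]
    norm_num
  have : G (-1) = ∑ k ∈ range 5, f k + ∑' k : ℕ, f (k + 5) := by
    rw [G]; exact hsplit.symm
  rw [this, hhead]
  linarith

lemma G_neg_two_neg : G (-2) < 0 := by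
  set f : ℕ → ℝ := fun k => (1 + (-2:ℝ) * k) / ((k - (-2)) * (1 + (k : ℝ) ^ 2)) with hf
  have hs : Summable f := summable_G (by norm_num)
  have hsplit := Summable.sum_add_tsum_nat_add 10 hs
  have hstail : Summable (fun k : ℕ => f (k + 10)) := (summable_nat_add_iff 10).2 hs
  have htail : ∑' k : ℕ, f (k + 10) ≤ 0 := by
    apply tsum_nonpos
    intro k
    have hk : (0:ℝ) ≤ (k : ℝ) := Nat.cast_nonneg k
    simp only [hf]
    push_cast
    apply div_nonpos_of_nonpos_of_nonneg
    · linarith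
    · nlinarith
  have hhead : ∑ k ∈ range 10, f k < 0 := by
    simp only [hf, Finset.sum_range_succ, Finset.sum_range_zero]
    norm_num
  have : G (-2) = ∑ k ∈ range 10, f k + ∑' k : ℕ, f (k + 10) := by
    rw [G]; exact hsplit.symm
  rw [this]
  linarith

lemma G_continuousOn : ContinuousOn G (Set.Icc (-2 : ℝ) (-1)) := by
  apply continuousOn_tsum (u := fun k : ℕ => 6 * (1 / (((k : ℝ) + 1) * ((k : ℝ) + 1 + 1))))
  · intro k
    apply ContinuousOn.div
    · fun_prop
    · fun_prop
    · intro l hl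
      exact ne_of_gt (denom_pos hl.2 k)
  · exact summable_bound
  · intro k l hl
    exact term_bound hl k

theorem stmt_4 :
    G (-1) > 0 ∧ G (-2) < 0 ∧ ∃ l ∈ Set.Ioo (-2 : ℝ) (-1), G l = 0 := by
  refine ⟨G_neg_one_pos, G_neg_two_neg, ?_⟩
  have h := intermediate_value_Ioo (by norm_num : (-2:ℝ) ≤ -1) G_continuousOn
  have h0 : (0:ℝ) ∈ Set.Ioo (G (-2)) (G (-1)) := ⟨G_neg_two_neg, G_neg_one_pos⟩
  obtain ⟨l, hl, hGl⟩ := h h0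
  exact ⟨l, hl, hGl⟩
end

section
/- Let G(λ) = ∑_{k=0}^{∞} (1 + λk)/((k − λ)(1 + k²)). For every n ∈ ℕ₀, G is strictly increasing on the open interval (n, n+1), with G(λ) → −∞ as λ ↓ n and G(λ) → +∞ as λ ↑ n+1. Consequently, for every real c there is exactly one λ ∈ (n, n+1) with G(λ) = c. -/
open Filter Set Topology

namespace Stmt7Aux

noncomputable def F (l : ℝ) (k : ℕ) : ℝ := (1 + l * k) / (((k : ℝ) - l) * (1 + (k : ℝ) ^ 2))

lemma G_eq (l : ℝ) : G l = ∑' k, F l k := rfl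

/-- Generic summability from an eventual `C / k^2` bound. -/
lemma summable_of_tail_bound (g : ℕ → ℝ) (C : ℝ) (K : ℕ)
    (h : ∀ k : ℕ, K ≤ k → |g k| ≤ C / (k : ℝ) ^ 2) : Summable g := by
  rw [← summable_nat_add_iff (K + 1)]
  refine Summable.of_norm_bounded (g := fun k : ℕ => C / ((k : ℝ) + (K + 1)) ^ 2) ?_ ?_
  · have h0 : Summable (fun k : ℕ => C * (1 / (k : ℝ) ^ 2)) :=
      (Real.summable_one_div_nat_pow.mpr one_lt_two).mul_left C
    have h1 := (summable_nat_add_iff (K + 1)).mpr h0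
    apply h1.congr
    intro k
    push_cast
    ring
  · intro k
    have := h (k + (K + 1)) (by omega)
    rw [Real.norm_eq_abs]
    convert this using 2
    push_cast
    ring

/-- Summability of the generic bounding sequence. -/
lemma summable_gen (n : ℕ) (d : ℕ → ℝ) (hd : ∀ k, 0 < d k)
    (hd2 : ∀ k : ℕ, 2 * n + 2 ≤ k → (k : ℝ) / 2 ≤ d k) :
    Summable (fun k : ℕ => (1 + ((n : ℝ) + 1) * k) / (d k * (1 + (k : ℝ) ^ 2))) := by
  apply summable_of_tail_bound _ (2 * ((n : ℝ) + 2)) (2 * n + 2)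
  intro k hk
  have hk1 : (1 : ℝ) ≤ (k : ℝ) := by exact_mod_cast (by omega : 1 ≤ k)
  have hkpos : (0 : ℝ) < k := by linarith
  have hdk := hd k
  have hdk2 := hd2 k hk
  have hden : (0 : ℝ) < d k * (1 + (k : ℝ) ^ 2) := by positivity
  rw [abs_of_nonneg (by positivity)]
  rw [div_le_div_iff₀ hden (by positivity)]
  have hn0 : (0 : ℝ) ≤ (n : ℝ) := Nat.cast_nonneg n
  have hcube : (k : ℝ) ^ 2 ≤ (k : ℝ) ^ 3 := by nlinarith
  nlinarith [mul_le_mul_of_nonneg_left hdk2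
    (le_of_lt (by positivity : (0 : ℝ) < 2 * ((n : ℝ) + 2) * (1 + (k : ℝ) ^ 2)))]

variable {n : ℕ}

lemma lt_cast_of_le {x : ℝ} (hx : (n : ℝ) < x) {k : ℕ} (hk : k ≤ n) : (k : ℝ) < x :=
  lt_of_le_of_lt (by exact_mod_cast hk) hx

lemma cast_lt_of_ge {x : ℝ} (hx : x < (n : ℝ) + 1) {k : ℕ} (hk : n + 1 ≤ k) : x < (k : ℝ) :=
  lt_of_lt_of_le hx (by exact_mod_cast hk)

lemma denom_prod_pos {x y : ℝ} (hx : x ∈ Ioo (n : ℝ) (n + 1)) (hy : y ∈ Ioo (n : ℝ) (n + 1))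
    (k : ℕ) : 0 < ((k : ℝ) - x) * ((k : ℝ) - y) := by
  rcases le_or_gt k n with hk | hk
  · have h1 := lt_cast_of_le hx.1 hk
    have h2 := lt_cast_of_le hy.1 hk
    exact mul_pos_of_neg_of_neg (by linarith) (by linarith)
  · have hk' : n + 1 ≤ k := hk
    have h1 := cast_lt_of_ge hx.2 hk'
    have h2 := cast_lt_of_ge hy.2 hk'
    exact mul_pos (by linarith) (by linarith)

lemma denom_ne {x : ℝ} (hx : x ∈ Ioo (n : ℝ) (n + 1)) (k : ℕ) : (k : ℝ) - x ≠ 0 := by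
  rcases le_or_gt k n with hk | hk
  · have := lt_cast_of_le hx.1 hk; linarith
  · have := cast_lt_of_ge hx.2 hk; linarith

lemma x_nonneg {x : ℝ} (hx : (n : ℝ) < x) : 0 ≤ x :=
  le_of_lt (lt_of_le_of_lt (Nat.cast_nonneg n) hx)

lemma abs_F {x : ℝ} (hx0 : 0 ≤ x) (k : ℕ) :
    |F x k| = (1 + x * k) / (|(k : ℝ) - x| * (1 + (k : ℝ) ^ 2)) := by
  have hnum : (0 : ℝ) ≤ 1 + x * k := by positivity
  rw [F, abs_div, abs_of_nonneg hnum, abs_mul, abs_of_nonneg (by positivity : (0:ℝ) ≤ 1 + (k:ℝ)^2)]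

/-- bound `|F x k| ≤` generic form, given a lower bound on `|k - x|`. -/
lemma abs_F_le {x : ℝ} (hx0 : 0 ≤ x) (hx1 : x ≤ (n : ℝ) + 1) {k : ℕ} {δ : ℝ} (hδ : 0 < δ)
    (hδ2 : δ ≤ |(k : ℝ) - x|) :
    |F x k| ≤ (1 + ((n : ℝ) + 1) * k) / (δ * (1 + (k : ℝ) ^ 2)) := by
  rw [abs_F hx0]
  have hk2 : (0 : ℝ) < 1 + (k : ℝ) ^ 2 := by positivity
  apply div_le_div₀ (by positivity) ?_ (by positivity) ?_
  · have : x * k ≤ ((n : ℝ) + 1) * k := by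
      apply mul_le_mul_of_nonneg_right hx1 (Nat.cast_nonneg k)
    linarith
  · exact mul_le_mul_of_nonneg_right hδ2 (le_of_lt hk2)

lemma summable_F {x : ℝ} (hx : x ∈ Ioo (n : ℝ) (n + 1)) : Summable (F x) := by
  have hx0 := x_nonneg hx.1
  refine Summable.of_norm_bounded
    (g := fun k : ℕ => (1 + ((n : ℝ) + 1) * k) / (|(k : ℝ) - x| * (1 + (k : ℝ) ^ 2)))
    (summable_gen n _ (fun k => abs_pos.mpr (denom_ne hx k)) ?_) ?_
  · intro k hk
    have hk' : n + 1 ≤ k := by omega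
    have h1 := cast_lt_of_ge hx.2 hk'
    have hkc : (2 * (n : ℝ) + 2) ≤ (k : ℝ) := by exact_mod_cast hk
    rw [abs_of_pos (by linarith)]
    linarith [hx.2]
  · intro k
    rw [Real.norm_eq_abs]
    exact abs_F_le hx0 (le_of_lt hx.2) (abs_pos.mpr (denom_ne hx k)) le_rfl

lemma F_sub {x y : ℝ} (hx : x ∈ Ioo (n : ℝ) (n + 1)) (hy : y ∈ Ioo (n : ℝ) (n + 1)) (k : ℕ) :
    F x k - F y k = (x - y) / (((k : ℝ) - x) * ((k : ℝ) - y)) := by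
  have h1 := denom_ne hx k
  have h2 := denom_ne hy k
  have h3 : (1 : ℝ) + (k : ℝ) ^ 2 ≠ 0 := by positivity
  rw [F, F]
  field_simp
  ring

lemma strictMonoG : StrictMonoOn G (Ioo (n : ℝ) (n + 1)) := by
  intro y hy x hx hyx
  have hsy := summable_F hy
  have hsx := summable_F hx
  have hterm : ∀ k : ℕ, 0 < (x - y) / (((k : ℝ) - x) * ((k : ℝ) - y)) := fun k =>
    div_pos (by linarith) (denom_prod_pos hx hy k)
  have hsum : Summable (fun k : ℕ => (x - y) / (((k : ℝ) - x) * ((k : ℝ) - y))) :=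
    (hsx.sub hsy).congr fun k => F_sub hx hy k
  have hdiff : G x - G y = ∑' k : ℕ, (x - y) / (((k : ℝ) - x) * ((k : ℝ) - y)) := by
    rw [G_eq, G_eq, ← Summable.tsum_sub hsx hsy]
    exact tsum_congr fun k => F_sub hx hy k
  have : 0 < G x - G y := by
    rw [hdiff]
    exact Summable.tsum_pos hsum (fun k => le_of_lt (hterm k)) 0 (hterm 0)
  linarith

lemma contG {a b : ℝ} (ha : (n : ℝ) < a) (hb : b < (n : ℝ) + 1) :
    ContinuousOn G (Icc a b) := by
  have key : ContinuousOn (fun x => ∑' k : ℕ, F x k) (Icc a b) := by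
    refine continuousOn_tsum (f := fun k (x : ℝ) => F x k)
      (u := fun k : ℕ => (1 + ((n : ℝ) + 1) * k) /
        ((if k ≤ n then a - n else (k : ℝ) - b) * (1 + (k : ℝ) ^ 2))) ?_ ?_ ?_
    · intro k
      apply ContinuousOn.div (by fun_prop) (by fun_prop)
      intro x hxm
      have hx : x ∈ Ioo (n : ℝ) (n + 1) := ⟨lt_of_lt_of_le ha hxm.1, lt_of_le_of_lt hxm.2 hb⟩
      exact mul_ne_zero (denom_ne hx k) (by positivity)
    · apply summable_gen
      · intro k
        split_ifs with hk
        · linarith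
        · have hk' : n + 1 ≤ k := by omega
          have : (n : ℝ) + 1 ≤ (k : ℝ) := by exact_mod_cast hk'
          linarith
      · intro k hk
        have hkn : ¬ k ≤ n := by omega
        rw [if_neg hkn]
        have hkc : (2 * (n : ℝ) + 2) ≤ (k : ℝ) := by exact_mod_cast hk
        linarith
    · intro k x hxm
      have hx : x ∈ Ioo (n : ℝ) (n + 1) := ⟨lt_of_lt_of_le ha hxm.1, lt_of_le_of_lt hxm.2 hb⟩
      rw [Real.norm_eq_abs]
      apply abs_F_le (x_nonneg hx.1) (le_of_lt hx.2)
      · split_ifs with hk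
        · linarith
        · have hk' : n + 1 ≤ k := by omega
          have : (n : ℝ) + 1 ≤ (k : ℝ) := by exact_mod_cast hk'
          linarith
      · rcases le_or_gt k n with hk | hk
        · rw [if_pos hk]
          have h1 : (k : ℝ) ≤ n := by exact_mod_cast hk
          rw [abs_sub_comm, abs_of_nonneg (by linarith [hxm.1] : (0:ℝ) ≤ x - k)]
          linarith [hxm.1]
        · rw [if_neg (by omega)]
          have h1 : (n : ℝ) + 1 ≤ (k : ℝ) := by exact_mod_cast (hk : n + 1 ≤ k)
          rw [abs_of_nonneg (by linarith [hxm.2] : (0:ℝ) ≤ (k : ℝ) - x)]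
          linarith [hxm.2]
  exact key

/-- The tail sum with index `m` removed, bounded uniformly. -/
lemma tail_bound (m : ℕ) (δ : ℕ → ℝ) (hδ : ∀ k, 0 < δ k)
    (hδ2 : ∀ k : ℕ, 2 * n + 2 ≤ k → (k : ℝ) / 2 ≤ δ k) :
    ∃ M : ℝ, ∀ x ∈ Ioo (n : ℝ) (n + 1),
      (∀ k : ℕ, k ≠ m → δ k ≤ |(k : ℝ) - x|) →
      |∑' k : ℕ, ite (k = m) 0 (F x k)| ≤ M := by
  classical
  set u : ℕ → ℝ := fun k => (1 + ((n : ℝ) + 1) * k) / (δ k * (1 + (k : ℝ) ^ 2)) with hu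
  have hsu : Summable u := summable_gen n δ hδ hδ2
  refine ⟨∑' k, u k, ?_⟩
  intro x hx hxd
  have hbound : ∀ k : ℕ, |ite (k = m) (0 : ℝ) (F x k)| ≤ u k := by
    intro k
    by_cases hk : k = m
    · subst hk
      rw [if_pos rfl, abs_zero]
      show (0:ℝ) ≤ (1 + ((n : ℝ) + 1) * k) / (δ k * (1 + (k : ℝ) ^ 2))
      have h1 : (0:ℝ) < δ k * (1 + (k : ℝ) ^ 2) := mul_pos (hδ k) (by positivity)
      exact div_nonneg (by positivity) h1.le
    · rw [if_neg hk]
      exact abs_F_le (x_nonneg hx.1) (le_of_lt hx.2) (hδ k) (hxd k hk)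
  have hs2 : Summable (fun k : ℕ => |ite (k = m) (0 : ℝ) (F x k)|) :=
    Summable.of_nonneg_of_le (fun k => abs_nonneg _) hbound hsu
  have hs2' : Summable (fun k : ℕ => ‖ite (k = m) (0 : ℝ) (F x k)‖) := by
    simpa only [Real.norm_eq_abs] using hs2
  have habs : |∑' k : ℕ, ite (k = m) (0 : ℝ) (F x k)| ≤
      ∑' k : ℕ, |ite (k = m) (0 : ℝ) (F x k)| := by
    simpa only [Real.norm_eq_abs] using norm_tsum_le_tsum_norm hs2'
  exact le_trans habs (Summable.tsum_le_tsum hbound hs2 hsu)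

lemma G_decomp {x : ℝ} (hx : x ∈ Ioo (n : ℝ) (n + 1)) (m : ℕ) :
    G x = F x m + ∑' k : ℕ, ite (k = m) 0 (F x k) := by
  rw [G_eq]
  exact Summable.tsum_eq_add_tsum_ite (summable_F hx) m

lemma tendsto_G_bot : Tendsto G (𝓝[>] (n : ℝ)) atBot := by
  -- tail bound with m = n
  obtain ⟨M, hM⟩ := tail_bound (n := n) n
      (fun k => if k ≤ n then (1 : ℝ) / 2 else (k : ℝ) - ((n : ℝ) + 1 / 2))
      (by
        intro k
        show (0:ℝ) < if k ≤ n then (1 : ℝ) / 2 else (k : ℝ) - ((n : ℝ) + 1 / 2)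
        split_ifs with hk
        · norm_num
        · have hk' : n + 1 ≤ k := by omega
          have : (n : ℝ) + 1 ≤ (k : ℝ) := by exact_mod_cast hk'
          linarith)
      (by
        intro k hk
        show (k : ℝ) / 2 ≤ if k ≤ n then (1 : ℝ) / 2 else (k : ℝ) - ((n : ℝ) + 1 / 2)
        have hkn : ¬ k ≤ n := by omega
        rw [if_neg hkn]
        have hkc : (2 * (n : ℝ) + 2) ≤ (k : ℝ) := by exact_mod_cast hk
        linarith)
  have hev : ∀ᶠ x in 𝓝[>] (n : ℝ), G x ≤ F x n + M := by
    filter_upwards [Ioo_mem_nhdsGT (by linarith : (n : ℝ) < n + 1 / 2)] with x hx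
    have hx' : x ∈ Ioo (n : ℝ) (n + 1) := ⟨hx.1, by linarith [hx.2]⟩
    have htail := hM x hx' ?_
    · rw [G_decomp hx' n]
      have := abs_le.mp htail
      linarith [this.2]
    · intro k hk
      split_ifs with hkn
      · have hkn' : k ≤ n - 1 ∨ k = n := by omega
        rcases hkn' with hkn' | hkn'
        · have h1 : (k : ℝ) ≤ (n : ℝ) - 1 := by
            have : (k : ℝ) + 1 ≤ (n : ℝ) := by exact_mod_cast (by omega : k + 1 ≤ n)
            linarith
          rw [abs_sub_comm, abs_of_nonneg (by linarith [hx.1] : (0:ℝ) ≤ x - k)]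
          linarith [hx.1]
        · exact absurd hkn' hk
      · have hk' : n + 1 ≤ k := by omega
        have h1 : (n : ℝ) + 1 ≤ (k : ℝ) := by exact_mod_cast hk'
        rw [abs_of_nonneg (by linarith [hx.2] : (0:ℝ) ≤ (k : ℝ) - x)]
        linarith [hx.2]
  apply tendsto_atBot_mono' _ hev
  apply tendsto_atBot_add_const_right
  -- F x n → -∞
  have h1 : Tendsto (fun x : ℝ => ((x - n) * (1 + (n : ℝ) ^ 2))⁻¹) (𝓝[>] (n : ℝ)) atTop := by
    apply tendsto_inv_nhdsGT_zero.comp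
    rw [tendsto_nhdsWithin_iff]
    constructor
    · have hc : Continuous (fun x : ℝ => (x - n) * (1 + (n : ℝ) ^ 2)) := by fun_prop
      have := hc.tendsto (n : ℝ)
      simp only [sub_self, zero_mul] at this
      exact this.mono_left nhdsWithin_le_nhds
    · filter_upwards [self_mem_nhdsWithin] with x hx
      have : (n : ℝ) < x := hx
      have : (0 : ℝ) < x - n := by linarith
      exact mul_pos this (by positivity)
  have h2 : Tendsto (fun x : ℝ => -(1 + x * n)) (𝓝[>] (n : ℝ)) (𝓝 (-(1 + (n : ℝ) * n))) := by
    apply Tendsto.mono_left ?_ nhdsWithin_le_nhds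
    have hc : Continuous (fun x : ℝ => -(1 + x * n)) := by fun_prop
    exact hc.tendsto _
  have h3 : Tendsto (fun x : ℝ => -(1 + x * n) * ((x - n) * (1 + (n : ℝ) ^ 2))⁻¹)
      (𝓝[>] (n : ℝ)) atBot := by
    apply Filter.Tendsto.neg_mul_atTop (C := -(1 + (n : ℝ) * n)) (by nlinarith [sq_nonneg (n:ℝ)]) h2 h1
  apply h3.congr'
  filter_upwards [self_mem_nhdsWithin] with x hx
  have hxn : (n : ℝ) < x := hx
  have hne : x - (n : ℝ) ≠ 0 := by linarith
  have hne2 : (1 : ℝ) + (n : ℝ) ^ 2 ≠ 0 := by positivity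
  rw [F, show ((n : ℝ) - x) * (1 + (n : ℝ) ^ 2) = -((x - n) * (1 + (n : ℝ) ^ 2)) by ring,
    div_neg, div_eq_mul_inv]
  ring

lemma tendsto_G_top : Tendsto G (𝓝[<] ((n : ℝ) + 1)) atTop := by
  obtain ⟨M, hM⟩ := tail_bound (n := n) (n + 1)
      (fun k => if k ≤ n + 1 then (1 : ℝ) / 2 else (k : ℝ) - ((n : ℝ) + 1))
      (by
        intro k
        show (0:ℝ) < if k ≤ n + 1 then (1 : ℝ) / 2 else (k : ℝ) - ((n : ℝ) + 1)
        split_ifs with hk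
        · norm_num
        · have hk' : n + 2 ≤ k := by omega
          have : (n : ℝ) + 2 ≤ (k : ℝ) := by exact_mod_cast hk'
          linarith)
      (by
        intro k hk
        show (k : ℝ) / 2 ≤ if k ≤ n + 1 then (1 : ℝ) / 2 else (k : ℝ) - ((n : ℝ) + 1)
        have hkn : ¬ k ≤ n + 1 := by omega
        rw [if_neg hkn]
        have hkc : (2 * (n : ℝ) + 2) ≤ (k : ℝ) := by exact_mod_cast hk
        linarith)
  have hev : ∀ᶠ x in 𝓝[<] ((n : ℝ) + 1), F x (n + 1) - M ≤ G x := by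
    filter_upwards [Ioo_mem_nhdsLT (by linarith : (n : ℝ) + 1 / 2 < (n : ℝ) + 1)] with x hx
    have hx' : x ∈ Ioo (n : ℝ) (n + 1) := ⟨by linarith [hx.1], hx.2⟩
    have htail := hM x hx' ?_
    · rw [G_decomp hx' (n + 1)]
      have := abs_le.mp htail
      linarith [this.1]
    · intro k hk
      split_ifs with hkn
      · have hkn' : k ≤ n := by omega
        have h1 : (k : ℝ) ≤ (n : ℝ) := by exact_mod_cast hkn'
        rw [abs_sub_comm, abs_of_nonneg (by linarith [hx.1] : (0:ℝ) ≤ x - k)]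
        linarith [hx.1]
      · have hk' : n + 2 ≤ k := by omega
        have h1 : (n : ℝ) + 2 ≤ (k : ℝ) := by exact_mod_cast hk'
        rw [abs_of_nonneg (by linarith [hx.2] : (0:ℝ) ≤ (k : ℝ) - x)]
        linarith [hx.2]
  apply tendsto_atTop_mono' _ hev
  apply tendsto_atTop_add_const_right
  -- F x (n+1) → +∞
  have h1 : Tendsto (fun x : ℝ => ((((n : ℝ) + 1) - x) * (1 + ((n : ℝ) + 1) ^ 2))⁻¹)
      (𝓝[<] ((n : ℝ) + 1)) atTop := by
    apply tendsto_inv_nhdsGT_zero.comp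
    rw [tendsto_nhdsWithin_iff]
    constructor
    · have hc : Continuous (fun x : ℝ => (((n : ℝ) + 1) - x) * (1 + ((n : ℝ) + 1) ^ 2)) := by
        fun_prop
      have := hc.tendsto ((n : ℝ) + 1)
      simp only [sub_self, zero_mul] at this
      exact this.mono_left nhdsWithin_le_nhds
    · filter_upwards [self_mem_nhdsWithin] with x hx
      have : x < (n : ℝ) + 1 := hx
      have : (0 : ℝ) < ((n : ℝ) + 1) - x := by linarith
      exact mul_pos this (by positivity)
  have h2 : Tendsto (fun x : ℝ => 1 + x * ((n : ℝ) + 1)) (𝓝[<] ((n : ℝ) + 1))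
      (𝓝 (1 + ((n : ℝ) + 1) * ((n : ℝ) + 1))) := by
    apply Tendsto.mono_left ?_ nhdsWithin_le_nhds
    have hc : Continuous (fun x : ℝ => 1 + x * ((n : ℝ) + 1)) := by fun_prop
    exact hc.tendsto _
  have h3 : Tendsto (fun x : ℝ => (1 + x * ((n : ℝ) + 1)) *
      ((((n : ℝ) + 1) - x) * (1 + ((n : ℝ) + 1) ^ 2))⁻¹) (𝓝[<] ((n : ℝ) + 1)) atTop :=
    Filter.Tendsto.pos_mul_atTop (by nlinarith [sq_nonneg ((n:ℝ) + 1)]) h2 h1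
  apply h3.congr
  intro x
  rw [F, div_eq_mul_inv]
  push_cast
  ring
end Stmt7Aux

open Stmt7Aux in
theorem stmt_7 (n : ℕ) :
    StrictMonoOn G (Set.Ioo (n : ℝ) (n + 1)) ∧
    Filter.Tendsto G (nhdsWithin (n : ℝ) (Set.Ioi (n : ℝ))) Filter.atBot ∧
    Filter.Tendsto G (nhdsWithin ((n : ℝ) + 1) (Set.Iio ((n : ℝ) + 1))) Filter.atTop ∧
    ∀ c : ℝ, ∃! l, l ∈ Set.Ioo (n : ℝ) (n + 1) ∧ G l = c := by
  refine ⟨strictMonoG, tendsto_G_bot, tendsto_G_top, ?_⟩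
  intro c
  -- pick points with G below and above c
  have hb := tendsto_G_bot (n := n)
  have ht := tendsto_G_top (n := n)
  have h1 : ∀ᶠ x in 𝓝[>] (n : ℝ), G x < c := hb.eventually (eventually_lt_atBot c)
  have h2 : ∀ᶠ x in 𝓝[<] ((n : ℝ) + 1), c < G x := ht.eventually (eventually_gt_atTop c)
  obtain ⟨x₁, hx₁c, hx₁⟩ :=
    (h1.and (Ioo_mem_nhdsGT (by linarith [Nat.cast_nonneg (α := ℝ) n] :
      (n : ℝ) < (n : ℝ) + 1))).exists
  obtain ⟨x₂, hx₂c, hx₂⟩ :=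
    (h2.and (Ioo_mem_nhdsLT (by linarith [Nat.cast_nonneg (α := ℝ) n] :
      (n : ℝ) < (n : ℝ) + 1))).exists
  have hlt : x₁ < x₂ := by
    by_contra h
    push_neg at h
    rcases eq_or_lt_of_le h with h | h
    · rw [← h] at hx₁c; linarith
    · have := strictMonoG (n := n) hx₂ hx₁ h
      linarith
  have hcont : ContinuousOn G (Icc x₁ x₂) := contG hx₁.1 hx₂.2
  have hIoo := intermediate_value_Ioo (le_of_lt hlt) hcont
  obtain ⟨l, hl, hGl⟩ := hIoo ⟨hx₁c, hx₂c⟩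
  have hlmem : l ∈ Ioo (n : ℝ) (n + 1) := ⟨lt_trans hx₁.1 hl.1, lt_trans hl.2 hx₂.2⟩
  refine ⟨l, ⟨hlmem, hGl⟩, ?_⟩
  rintro y ⟨hy, hGy⟩
  exact strictMonoG.injOn hy hlmem (by rw [hGy, hGl])
end

section
/- Let L be the quadratic form Q_L(x) = ∑_{k=0}^{∞} k·|x_k|² defined on D₀ = {x ∈ ℓ²(ℕ₀) : (k·x_k) ∈ ℓ², ∑_k x_k = 0}. Then inf { Q_L(x)/‖x‖² : x ∈ D₀, x ≠ 0 } = 0; i.e., Q_L(x) ≥ 0 for all x ∈ D₀, and for every ε > 0 there exists nonzero x ∈ D₀ with Q_L(x) < ε·‖x‖². -/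
open Finset Filter

theorem stmt_8 :
    (∀ x : ℕ → ℂ,
      Summable (fun k : ℕ => ‖x k‖ ^ 2) → Summable (fun k : ℕ => ‖(k : ℂ) * x k‖ ^ 2) →
      (∑' k, x k) = 0 → 0 ≤ ∑' k : ℕ, (k : ℝ) * ‖x k‖ ^ 2) ∧
    ∀ ε : ℝ, ε > 0 →
      ∃ x : ℕ → ℂ,
        Summable (fun k : ℕ => ‖x k‖ ^ 2) ∧ Summable (fun k : ℕ => ‖(k : ℂ) * x k‖ ^ 2) ∧
        (∑' k, x k) = 0 ∧ x ≠ 0 ∧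
        (∑' k : ℕ, (k : ℝ) * ‖x k‖ ^ 2) < ε * ∑' k : ℕ, ‖x k‖ ^ 2 := by
  constructor
  · intro x _ _ _
    exact tsum_nonneg fun k => by positivity
  · intro ε hε
    obtain ⟨n, hn⟩ : ∃ n : ℕ, 1/ε + 1 ≤ ∑ i ∈ Finset.range n, (1 / (i + 1) : ℝ) := by
      have := Real.tendsto_sum_range_one_div_nat_succ_atTop.eventually_ge_atTop (1/ε + 1)
      exact this.exists
    set H : ℝ := ∑ i ∈ Finset.range n, (1 / (i + 1) : ℝ) with hH
    have hHpos : 0 < H := lt_of_lt_of_le (by positivity) hn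
    set x : ℕ → ℂ := fun k => if k = 0 then -(H : ℂ) else if k ≤ n then (k : ℂ)⁻¹ else 0
      with hx
    have hzero : ∀ k ∉ Finset.range (n + 1), x k = 0 := by
      intro k hk
      simp only [Finset.mem_range, not_lt] at hk
      simp only [hx]
      rw [if_neg (by omega), if_neg (by omega)]
    have hzero1 : ∀ k ∉ Finset.range (n + 1), ‖x k‖ ^ 2 = 0 := fun k hk => by
      simp [hzero k hk]
    have hzero2 : ∀ k ∉ Finset.range (n + 1), ‖(k : ℂ) * x k‖ ^ 2 = 0 := fun k hk => by
      simp [hzero k hk]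
    have hzero3 : ∀ k ∉ Finset.range (n + 1), (k : ℝ) * ‖x k‖ ^ 2 = 0 := fun k hk => by
      simp [hzero k hk]
    -- values on range
    have hx0 : x 0 = -(H : ℂ) := by simp [hx]
    have hxs : ∀ i < n, x (i + 1) = ((i : ℂ) + 1)⁻¹ := by
      intro i hi
      simp [hx, Nat.succ_le_of_lt hi]
    refine ⟨x, summable_of_ne_finset_zero hzero1, summable_of_ne_finset_zero hzero2, ?_, ?_, ?_⟩
    · rw [tsum_eq_sum hzero, Finset.sum_range_succ']
      rw [hx0]
      have : ∀ i ∈ Finset.range n, x (i + 1) = ((i : ℂ) + 1)⁻¹ := fun i hi =>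
        hxs i (Finset.mem_range.mp hi)
      rw [Finset.sum_congr rfl this]
      have : ((H : ℂ)) = ∑ i ∈ Finset.range n, ((i : ℂ) + 1)⁻¹ := by
        rw [hH]; push_cast; simp [one_div]
      rw [this]; ring
    · intro h
      have : x 0 = 0 := by rw [h]; rfl
      rw [hx0] at this
      have : (H : ℂ) = 0 := by linear_combination -this
      exact absurd (by exact_mod_cast this) (ne_of_gt hHpos)
    · have hnorm0 : ‖x 0‖ ^ 2 = H ^ 2 := by
        rw [hx0, norm_neg, Complex.norm_real, Real.norm_eq_abs, sq_abs]
      have hQ : (∑' k : ℕ, (k : ℝ) * ‖x k‖ ^ 2) = H := by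
        rw [tsum_eq_sum hzero3, Finset.sum_range_succ']
        simp only [Nat.cast_zero, zero_mul, add_zero]
        rw [hH]
        refine Finset.sum_congr rfl fun i hi => ?_
        rw [hxs i (Finset.mem_range.mp hi)]
        have h1 : ‖((i : ℂ) + 1)⁻¹‖ = ((i : ℝ) + 1)⁻¹ := by
          rw [norm_inv]
          norm_cast
        rw [h1]
        have : (0:ℝ) < (i : ℝ) + 1 := by positivity
        push_cast
        field_simp
      have hNle : H ^ 2 ≤ ∑' k : ℕ, ‖x k‖ ^ 2 := by
        rw [tsum_eq_sum hzero1]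
        calc H ^ 2 = ‖x 0‖ ^ 2 := hnorm0.symm
          _ ≤ _ := Finset.single_le_sum (f := fun k => ‖x k‖ ^ 2)
              (fun k _ => by positivity) (Finset.mem_range.mpr (Nat.succ_pos n))
      rw [hQ]
      have h1 : 1/ε < H := lt_of_lt_of_le (by linarith) hn
      have h2 : 1 < ε * H := by
        rw [div_lt_iff₀ hε] at h1; linarith [h1]
      calc H = 1 * H := (one_mul H).symm
        _ < (ε * H) * H := by nlinarith
        _ = ε * H ^ 2 := by ring
        _ ≤ ε * ∑' k : ℕ, ‖x k‖ ^ 2 := by nlinarith [hNle]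
end

section
/- For 0 ≤ x ≤ 1, ∑_{n=0}^{∞} cos(2πnx)/(1+n²) = (π/2)·cosh(2π(x − 1/2))/sinh(π) + 1/2. -/
open Real Complex Set

lemma intKey (n : ℤ) :
    (∫ x in (0:ℝ)..1, Complex.exp (2*π*Complex.I*(-n)*x) * Complex.cosh (2*π*((x:ℂ)-1/2)))
      = Real.sinh π / (π*(1+(n:ℂ)^2)) := by
  have hπ : (π:ℂ) ≠ 0 := by exact_mod_cast Real.pi_ne_zero
  have h1 : (2*(π:ℂ) - 2*π*n*Complex.I) ≠ 0 := by
    intro h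
    have := congrArg Complex.re h
    simp [Complex.ext_iff, Real.pi_ne_zero] at this
  have h2 : (-(2*(π:ℂ)) - 2*π*n*Complex.I) ≠ 0 := by
    intro h
    have := congrArg Complex.re h
    simp [Complex.ext_iff, Real.pi_ne_zero] at this
  have key : ∀ x : ℝ, Complex.exp (2*π*Complex.I*(-n)*x) * Complex.cosh (2*π*((x:ℂ)-1/2))
      = (Complex.exp ((2*(π:ℂ) - 2*π*n*Complex.I)*x) * Complex.exp (-(π:ℂ))
         + Complex.exp ((-(2*(π:ℂ)) - 2*π*n*Complex.I)*x) * Complex.exp (π:ℂ))/2 := by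
    intro x
    have hA : (2*(π:ℂ)*Complex.I*(-(n:ℂ))*x) + 2*π*((x:ℂ)-1/2)
        = (2*(π:ℂ) - 2*π*n*Complex.I)*x + -(π:ℂ) := by ring
    have hB : (2*(π:ℂ)*Complex.I*(-(n:ℂ))*x) + -(2*π*((x:ℂ)-1/2))
        = (-(2*(π:ℂ)) - 2*π*n*Complex.I)*x + (π:ℂ) := by ring
    rw [Complex.cosh, ← mul_div_assoc, mul_add, ← Complex.exp_add, ← Complex.exp_add]
    push_cast
    rw [hA, hB, Complex.exp_add, Complex.exp_add]
  rw [intervalIntegral.integral_congr (fun x _ => key x)]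
  rw [intervalIntegral.integral_div]
  rw [intervalIntegral.integral_add
    ((Continuous.intervalIntegrable (by fun_prop) _ _))
    ((Continuous.intervalIntegrable (by fun_prop) _ _))]
  rw [intervalIntegral.integral_mul_const, intervalIntegral.integral_mul_const,
    integral_exp_mul_complex h1, integral_exp_mul_complex h2]
  have e1 : Complex.exp ((2*(π:ℂ) - 2*π*n*Complex.I)*1) = Complex.exp (π:ℂ) * Complex.exp (π:ℂ) := by
    rw [mul_one, Complex.exp_sub, show (2*(π:ℂ)*n*Complex.I) = n*(2*π*Complex.I) by ring,
      Complex.exp_int_mul_two_pi_mul_I, div_one, show (2*(π:ℂ)) = π + π by ring, Complex.exp_add]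
  have e2 : Complex.exp ((-(2*(π:ℂ)) - 2*π*n*Complex.I)*1)
      = (Complex.exp (π:ℂ) * Complex.exp (π:ℂ))⁻¹ := by
    rw [mul_one, Complex.exp_sub, show (2*(π:ℂ)*n*Complex.I) = n*(2*π*Complex.I) by ring,
      Complex.exp_int_mul_two_pi_mul_I, div_one, show (-(2*(π:ℂ))) = -π + -π by ring,
      Complex.exp_add, Complex.exp_neg]
    exact (mul_inv _ _).symm
  simp only [Complex.ofReal_one, Complex.ofReal_zero]
  rw [e1, e2, mul_zero, mul_zero, Complex.exp_zero]
  have hsinh : ((Real.sinh π : ℝ) : ℂ) = (Complex.exp (π:ℂ) - (Complex.exp (π:ℂ))⁻¹)/2 := by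
    rw [Complex.ofReal_sinh, Complex.sinh, Complex.exp_neg]
  rw [hsinh, Complex.exp_neg]
  have hE : Complex.exp (π:ℂ) ≠ 0 := Complex.exp_ne_zero _
  have hn2 : (1:ℂ) + (n:ℂ)^2 ≠ 0 := by
    have : ((1:ℂ) + (n:ℂ)^2) = ((1 + (n:ℝ)^2 : ℝ) : ℂ) := by push_cast; ring
    rw [this]
    exact_mod_cast (by positivity : (1 + (n:ℝ)^2) ≠ 0)
  have h12 : (2*(π:ℂ) - 2*π*n*Complex.I) * (-(2*(π:ℂ)) - 2*π*n*Complex.I)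
      = -(4*(π:ℂ)^2*(1+(n:ℂ)^2)) := by
    linear_combination (4*(π:ℂ)^2*(n:ℂ)^2) * Complex.I_sq
  rw [div_mul_eq_mul_div, div_mul_eq_mul_div, div_add_div _ _ h1 h2, h12, div_div,
    div_eq_div_iff
      (mul_ne_zero (neg_ne_zero.mpr (mul_ne_zero (mul_ne_zero (by norm_num) (pow_ne_zero 2 hπ)) hn2)) two_ne_zero)
      (mul_ne_zero hπ hn2)]
  field_simp
  ring

lemma coeffOn (n : ℤ) :
    fourierCoeffOn (zero_lt_one' ℝ) (fun x : ℝ => Complex.cosh (2*π*((x:ℂ)-1/2))) n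
      = ((Real.sinh π / (π*(1+(n:ℝ)^2)) : ℝ) : ℂ) := by
  rw [fourierCoeffOn_eq_integral]
  have : ∀ x : ℝ, x ∈ Set.uIcc (0:ℝ) 1 →
      (fourier (-n) (x : AddCircle ((1:ℝ)-0)) • Complex.cosh (2*π*((x:ℂ)-1/2)) : ℂ)
        = Complex.exp (2*π*Complex.I*(-n)*x) * Complex.cosh (2*π*((x:ℂ)-1/2)) := by
    intro x _
    rw [smul_eq_mul, fourier_coe_apply]
    norm_num
  rw [intervalIntegral.integral_congr this, intKey n]
  push_cast
  norm_num

lemma contLift : Continuous (AddCircle.liftIco 1 0 (fun x : ℝ => Complex.cosh (2*π*((x:ℂ)-1/2)))) := by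
  apply AddCircle.liftIco_zero_continuous
  · norm_num
  · fun_prop

lemma coeffLift (n : ℤ) :
    fourierCoeff (AddCircle.liftIco 1 0 (fun x : ℝ => Complex.cosh (2*π*((x:ℂ)-1/2)))) n
      = ((Real.sinh π / (π*(1+(n:ℝ)^2)) : ℝ) : ℂ) := by
  rw [fourierCoeff_liftIco_eq]
  simpa using coeffOn n

lemma summableNat : Summable (fun n : ℕ => Real.sinh π / (π*(1+(n:ℝ)^2))) := by
  have h2 : Summable (fun n : ℕ => 2*Real.sinh π/π * (1/((n:ℝ)+1)^2)) := by
    apply Summable.mul_left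
    have := Real.summable_one_div_nat_pow.mpr (le_refl 2)
    exact_mod_cast (summable_nat_add_iff 1).mpr this
  apply Summable.of_nonneg_of_le _ _ h2
  · intro n
    have hs : 0 < Real.sinh π := Real.sinh_pos_iff.mpr Real.pi_pos
    positivity
  intro n
  have hπ0 : (0:ℝ) < π := Real.pi_pos
  have hs : 0 < Real.sinh π := Real.sinh_pos_iff.mpr Real.pi_pos
  rw [show 2*Real.sinh π/π * (1/((n:ℝ)+1)^2) = (2*Real.sinh π)/(π*((n:ℝ)+1)^2) by
        field_simp,
    div_le_div_iff₀ (by positivity) (by positivity)]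
  nlinarith [mul_nonneg (mul_nonneg hs.le hπ0.le) (sq_nonneg ((n:ℝ)-1))]

lemma summableZ : Summable (fun n : ℤ =>
    ((Real.sinh π / (π*(1+(n:ℝ)^2)) : ℝ) : ℂ)) := by
  apply Summable.of_nat_of_neg <;>
  · apply Summable.congr (Complex.summable_ofReal.mpr summableNat)
    intro n
    push_cast
    norm_num

lemma hasSumZ {x : ℝ} (hx : x ∈ Set.Icc (0:ℝ) 1) :
    HasSum (fun n : ℤ => ((Real.sinh π / (π*(1+(n:ℝ)^2)) : ℝ) : ℂ) * fourier n (x : UnitAddCircle))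
      (Complex.cosh (2*π*((x:ℂ)-1/2))) := by
  suffices H : ∀ {y : ℝ}, y ∈ Ico (0:ℝ) 1 →
      HasSum (fun n : ℤ => ((Real.sinh π / (π*(1+(n:ℝ)^2)) : ℝ) : ℂ) * fourier n (y : UnitAddCircle))
        (Complex.cosh (2*π*((y:ℂ)-1/2))) by
    rw [← Ico_insert_right (zero_le_one' ℝ), mem_insert_iff, or_comm] at hx
    rcases hx with hx | rfl
    · exact H hx
    · have hcoe : ((1:ℝ) : UnitAddCircle) = ((0:ℝ) : UnitAddCircle) := by
        rw [AddCircle.coe_period]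
        exact (QuotientAddGroup.mk_zero _).symm
      rw [hcoe, show (2*(π:ℂ)*(((1:ℝ):ℂ)-1/2)) = -(2*π*(((0:ℝ):ℂ)-1/2)) by push_cast; ring,
        Complex.cosh_neg]
      exact H (left_mem_Ico.mpr zero_lt_one)
  intro y hy
  let B : C(UnitAddCircle, ℂ) :=
    ContinuousMap.mk (AddCircle.liftIco 1 0 (fun x : ℝ => Complex.cosh (2*π*((x:ℂ)-1/2)))) contLift
  have step1 : ∀ n : ℤ, fourierCoeff B n = ((Real.sinh π / (π*(1+(n:ℝ)^2)) : ℝ) : ℂ) := fun n =>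
    coeffLift n
  have step2 := has_pointwise_sum_fourier_series_of_summable
    (summableZ.congr fun n => (step1 n).symm) (y : UnitAddCircle)
  simp_rw [step1, smul_eq_mul] at step2
  convert step2 using 1
  show _ = B (y : UnitAddCircle)
  rw [ContinuousMap.coe_mk, AddCircle.liftIco_coe_apply (by rwa [zero_add] : y ∈ Ico 0 (0+1))]

theorem stmt_11 (x : ℝ) (hx : x ∈ Set.Icc (0 : ℝ) 1) :
    ∑' n : ℕ, Real.cos (2 * π * n * x) / (1 + (n : ℝ) ^ 2) =
      π / 2 * (Real.cosh (2 * π * (x - 1 / 2)) / Real.sinh π) + 1 / 2 := by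
  have h := (Complex.reCLM : ℂ →L[ℝ] ℝ).hasSum (hasSumZ hx)
  have hterm : ∀ n : ℤ, Complex.reCLM (((Real.sinh π / (π*(1+(n:ℝ)^2)) : ℝ) : ℂ)
      * fourier n (x : UnitAddCircle))
      = Real.sinh π / (π*(1+(n:ℝ)^2)) * Real.cos (2*π*n*x) := by
    intro n
    have hf : (fourier n (x : UnitAddCircle) : ℂ) = Complex.exp (((2*π*n*x : ℝ)) * Complex.I) := by
      rw [fourier_coe_apply]
      push_cast
      ring_nf
    simp only [Complex.reCLM_apply, hf, Complex.re_ofReal_mul, Complex.exp_ofReal_mul_I_re]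
  have hval : Complex.reCLM (Complex.cosh (2*π*((x:ℂ)-1/2))) = Real.cosh (2*π*(x-1/2)) := by
    rw [show (2*(π:ℂ)*((x:ℂ)-1/2)) = ((2*π*(x-1/2) : ℝ) : ℂ) by push_cast; ring]
    exact Complex.cosh_ofReal_re _
  rw [funext hterm] at h  -- may need simp_rw
  rw [hval] at h
  have h2 := h.nat_add_neg
  have hnn : ∀ n : ℕ, (Real.sinh π / (π*(1+((n:ℤ):ℝ)^2)) * Real.cos (2*π*((n:ℤ):ℝ)*x)
      + Real.sinh π / (π*(1+(((-n:ℤ)):ℝ)^2)) * Real.cos (2*π*(((-n:ℤ)):ℝ)*x))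
      = 2 * (Real.sinh π / (π*(1+(n:ℝ)^2)) * Real.cos (2*π*(n:ℝ)*x)) := by
    intro n
    push_cast
    rw [show 2*π*(-(n:ℝ))*x = -(2*π*(n:ℝ)*x) by ring, Real.cos_neg]
    ring
  rw [funext hnn] at h2
  have hzero : Real.sinh π / (π*(1+((0:ℤ):ℝ)^2)) * Real.cos (2*π*((0:ℤ):ℝ)*x) = Real.sinh π / π := by
    norm_num
  rw [hzero] at h2
  have hs : 0 < Real.sinh π := Real.sinh_pos_iff.mpr Real.pi_pos
  have hπ0 : (0:ℝ) < π := Real.pi_pos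
  have h3 := h2.mul_left (π / (2 * Real.sinh π))
  have hfun : ∀ n : ℕ, π / (2 * Real.sinh π) * (2 * (Real.sinh π / (π*(1+(n:ℝ)^2)) * Real.cos (2*π*(n:ℝ)*x)))
      = Real.cos (2*π*(n:ℝ)*x) / (1 + (n:ℝ)^2) := by
    intro n
    have : (1:ℝ) + (n:ℝ)^2 ≠ 0 := by positivity
    field_simp
  rw [funext hfun] at h3
  rw [h3.tsum_eq]
  field_simp
end

section
/- For all real φ, ∑_{n∈ℤ} (sin(π(φ−n)))²/(π(φ−n))² = 1, where the term with φ = n is interpreted as 1. -/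
open Real MeasureTheory AddCircle

theorem stmt_18 (φ : ℝ) :
    ∑' n : ℤ, (if φ = (n : ℝ) then (1 : ℝ)
      else Real.sin (π * (φ - n)) ^ 2 / (π * (φ - n)) ^ 2) = 1 := by
  haveI : Fact ((0:ℝ) < 1) := ⟨one_pos⟩
  set g : ℝ → ℂ := fun x => Complex.exp (2 * π * Complex.I * φ * x) with hg
  set G : AddCircle (1:ℝ) → ℂ := AddCircle.liftIoc 1 0 g with hGdef
  have hgc : Continuous g :=
    Complex.continuous_exp.comp (continuous_const.mul Complex.continuous_ofReal)
  have hGnorm : ∀ t, ‖G t‖ = 1 := by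
    intro t
    show ‖g _‖ = 1
    rw [hg]
    simp [Complex.norm_exp]
  have hGmeas : Measurable G := by
    have h1 : Measurable fun t : AddCircle (1:ℝ) => ((AddCircle.measurableEquivIoc 1 0) t : ℝ) :=
      measurable_subtype_coe.comp (AddCircle.measurableEquivIoc 1 0).measurable
    exact hgc.measurable.comp h1
  have hmem : MemLp G 2 haarAddCircle :=
    MemLp.of_bound hGmeas.aestronglyMeasurable 1
      (Filter.Eventually.of_forall fun t => (hGnorm t).le)
  set f := hmem.toLp G with hfdef
  have hae : ⇑f =ᵐ[haarAddCircle] G := hmem.coeFn_toLp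
  have hfG : ∀ n : ℤ, fourierCoeff (⇑f) n = fourierCoeff G n := by
    intro n
    unfold fourierCoeff
    apply integral_congr_ae
    filter_upwards [hae] with t ht
    rw [ht]
  have hcoeff : ∀ n : ℤ, fourierCoeff G n
      = ∫ x in (0:ℝ)..1, Complex.exp ((2 * π * Complex.I * ((φ:ℂ) - (n:ℤ))) * x) := by
    intro n
    rw [hGdef, fourierCoeff_eq_intervalIntegral _ n 0]
    rw [show ((1:ℝ)/1) = 1 by norm_num, one_smul, show ((0:ℝ)+1) = 1 by norm_num]
    refine intervalIntegral.integral_congr_ae (MeasureTheory.ae_of_all _ fun x hx => ?_)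
    rw [Set.uIoc_of_le (by norm_num : (0:ℝ) ≤ 1)] at hx
    rw [AddCircle.liftIoc_coe_apply (by simpa using hx), fourier_coe_apply, hg]
    show _ * Complex.exp _ = _
    rw [← Complex.exp_add]
    congr 1
    push_cast
    ring
  have hterm : ∀ n : ℤ, ‖fourierCoeff G n‖ ^ 2
      = if φ = (n : ℝ) then (1:ℝ) else Real.sin (π * (φ - n)) ^ 2 / (π * (φ - n)) ^ 2 := by
    intro n
    rw [hcoeff n]
    by_cases h : φ = (n : ℝ)
    · rw [if_pos h, h]
      norm_num
    · rw [if_neg h]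
      have hsub : ((φ:ℂ) - (n:ℤ)) ≠ 0 := by
        rw [sub_ne_zero]
        exact_mod_cast h
      have hc : (2 * (π:ℂ) * Complex.I * ((φ:ℂ) - (n:ℤ))) ≠ 0 := by
        refine mul_ne_zero (mul_ne_zero (mul_ne_zero two_ne_zero ?_) Complex.I_ne_zero) hsub
        exact_mod_cast Complex.ofReal_ne_zero.mpr Real.pi_ne_zero
      rw [integral_exp_mul_complex hc]
      rw [Complex.ofReal_one, Complex.ofReal_zero, mul_one, mul_zero, Complex.exp_zero]
      set θ : ℝ := 2 * π * (φ - n) with hθ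
      have hcθ : (2 * (π:ℂ) * Complex.I * ((φ:ℂ) - (n:ℤ))) = (θ:ℂ) * Complex.I := by
        rw [hθ]; push_cast; ring
      rw [hcθ, norm_div, div_pow]
      have hnum : ‖Complex.exp ((θ:ℂ) * Complex.I) - 1‖ ^ 2
          = 4 * Real.sin (π * (φ - n)) ^ 2 := by
        rw [Complex.sq_norm, Complex.normSq_apply]
        simp only [Complex.sub_re, Complex.sub_im, Complex.one_re, Complex.one_im,
          Complex.exp_ofReal_mul_I_re, Complex.exp_ofReal_mul_I_im]
        have h2 : θ = 2 * (π * (φ - n)) := by rw [hθ]; ring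
        rw [h2, Real.cos_two_mul, Real.sin_two_mul]
        linear_combination (4 * Real.cos (π * (φ - n)) ^ 2 - 4) *
          Real.sin_sq_add_cos_sq (π * (φ - n))
      have hden : ‖(θ:ℂ) * Complex.I‖ ^ 2 = 4 * (π * (φ - n)) ^ 2 := by
        rw [norm_mul, Complex.norm_I, Complex.norm_real, mul_one, Real.norm_eq_abs, sq_abs, hθ]
        ring
      rw [hnum, hden, mul_div_mul_left _ _ (by norm_num : (4:ℝ) ≠ 0)]
  have key := tsum_sq_fourierCoeff f
  have hRHS : ∫ t : AddCircle (1:ℝ), ‖f t‖ ^ 2 ∂haarAddCircle = 1 := by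
    rw [integral_congr_ae (g := fun _ => (1:ℝ))
      (by filter_upwards [hae] with t ht; rw [ht, hGnorm t]; norm_num)]
    simp
  rw [hRHS] at key
  refine (tsum_congr fun n => ?_).trans key
  rw [hfG n, hterm n]
end
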